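/- arXiv:cs/0605097 — 5 statements merged into one kernel-verified Lean document; each statement's English description precedes it below -/
import Mathlib

section
/- (Single Source Lemma) If fixed sets F_p for p ∈ P satisfy the single-source axiom, then for all p, p_a ∈ P, v ∈ V, and n ∈ ℕ: if v ∈ F_p and (p_a, v) ∈ f_R^n(k_0), then p = p_a and (p_a, v) ∈ k_0. That is, no principal other than the unique source of v ever learns v. -/
variable {P V : Type*}

def fR (R : Set (P × V × P × Set (P × V))) (k : Set (P × V)) : Set (P × V) :=
  k ∪ {pv | ∃ pb ka, (pb, pv.2) ∈ k ∧ ka ⊆ k ∧ (pb, pv.2, pv.1, ka) ∈ R}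

/-- `Fp` is a fixed set for `p`: every rule of `p` producing a value in `Fp` requires
the receiver to already know some value of `Fp`. -/
def isFixedSet (R : Set (P × V × P × Set (P × V))) (p : P) (Fp : Set V) : Prop :=
  ∀ v pa ka, (p, v, pa, ka) ∈ R → v ∈ Fp → ∃ x ∈ Fp, (pa, x) ∈ ka

theorem single_source_lemma
    (R : Set (P × V × P × Set (P × V))) (k0 : Set (P × V)) (F : P → Set V)
    (hNoSelf : ∀ (p : P) (v : V) (ka : Set (P × V)), (p, v, p, ka) ∉ R)
    (hFixed : ∀ p, isFixedSet R p (F p))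
    (hSS : ∀ (p pa : P) (v : V), v ∈ F p → (pa, v) ∈ k0 → p = pa) :
    ∀ (p pa : P) (v : V) (n : ℕ), v ∈ F p → (pa, v) ∈ (fR R)^[n] k0 →
      p = pa ∧ (pa, v) ∈ k0 := by
  intro p pa v n
  induction n generalizing p pa v with
  | zero => exact fun hv hk => ⟨hSS p pa v hv hk, hk⟩
  | succ n ih =>
    intro hv hk
    rw [Function.iterate_succ_apply'] at hk
    rcases hk with hk | ⟨pb, ka, hpb, hka, hR⟩
    · exact ih p pa v hv hk
    · obtain ⟨hpb', hk0⟩ := ih p pb v hv hpb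
      subst hpb'
      obtain ⟨x, hx, hxa⟩ := hFixed p v pa ka hR hv
      obtain ⟨rfl, _⟩ := ih p pa x hx (hka hxa)
      exact absurd hR (hNoSelf p v ka)
end

section
/- Under the single-source axiom, the maximal state of knowledge is confined: f_R^*(k_0) ⊆ k_0 ∪ (P × (Knowledge(k_0) − F)), where F = ⋃_{p∈P} F_p, provided Knowledge(k_0) = Knowledge(f_R^*(k_0)). -/
variable {P V : Type*}

/-- The pool of values known to some principal in state `k`. -/
def Knowledge (k : Set (P × V)) : Set V := {v | ∃ p, (p, v) ∈ k}

theorem maximal_knowledge_confined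
    (R : Set (P × V × P × Set (P × V))) (k0 : Set (P × V)) (F : P → Set V)
    (hNoSelf : ∀ (p : P) (v : V) (ka : Set (P × V)), (p, v, p, ka) ∉ R)
    (hFixed : ∀ p, isFixedSet R p (F p))
    (hSS : ∀ (p pa : P) (v : V), v ∈ F p → (pa, v) ∈ k0 → p = pa)
    (fstar : Set (P × V) → Set (P × V))
    (hfix : ∀ k, fR R (fstar k) = fstar k)
    (hle : ∀ k, k ⊆ fstar k)
    (hmin : ∀ k k', fR R k' = k' → k ⊆ k' → fstar k ⊆ k')
    (hPool : Knowledge k0 = Knowledge (fstar k0)) :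
    fstar k0 ⊆ k0 ∪ {pv : P × V | pv.2 ∈ Knowledge k0 ∧ pv.2 ∉ ⋃ p, F p} := by
  set S : Set (P × V) := k0 ∪ {pv : P × V | pv.2 ∈ Knowledge k0 ∧ pv.2 ∉ ⋃ p, F p} with hS
  apply hmin
  · -- fR R S = S
    apply Set.Subset.antisymm
    · rintro ⟨p, v⟩ h
      rcases h with h | ⟨pb, ka, hpb, hka, hR⟩
      · exact h
      · -- derived fact
        by_cases hF : v ∈ ⋃ q, F q
        · rcases Set.mem_iUnion.mp hF with ⟨q, hq⟩
          have hpbk0 : (pb, v) ∈ k0 := by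
            rcases hpb with h | ⟨_, hnot⟩
            · exact h
            · exact absurd hF hnot
          have hq' : q = pb := hSS q pb v hq hpbk0
          subst hq'
          rcases hFixed q v p ka hR hq with ⟨x, hx, hxka⟩
          have hxS : (p, x) ∈ S := hka hxka
          have hxk0 : (p, x) ∈ k0 := by
            rcases hxS with h | ⟨_, hnot⟩
            · exact h
            · exact absurd (Set.mem_iUnion.mpr ⟨q, hx⟩) hnot
          have : q = p := hSS q p x hx hxk0
          subst this
          exact absurd hR (hNoSelf q v ka)
        · right
          refine ⟨?_, hF⟩
          rcases hpb with h | ⟨hv, _⟩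
          · exact ⟨pb, h⟩
          · exact hv
    · exact Set.subset_union_left
  · exact Set.subset_union_left
end

section
/- Under the single-source axiom and the fixed-pool assumption, restricting to the rule set R_F does not change the maximal state of knowledge: f_{R_F}^*(k_0) = f_R^*(k_0), where R_F = {(p_b, x, p_a, k_a) ∈ R : {(p_b, x)} ∪ k_a ⊆ k_0 ∪ (P × (Knowledge(k_0) − F))}. -/
variable {P V : Type*}

theorem restriction_to_RF
    (R : Set (P × V × P × Set (P × V))) (k0 : Set (P × V)) (F : P → Set V)
    (hNoSelf : ∀ (p : P) (v : V) (ka : Set (P × V)), (p, v, p, ka) ∉ R)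
    (hFixed : ∀ p, isFixedSet R p (F p))
    (hSS : ∀ (p pa : P) (v : V), v ∈ F p → (pa, v) ∈ k0 → p = pa)
    (fstar : Set (P × V × P × Set (P × V)) → Set (P × V) → Set (P × V))
    (hfix : ∀ R' k, fR R' (fstar R' k) = fstar R' k)
    (hle : ∀ R' k, k ⊆ fstar R' k)
    (hmin : ∀ R' k k', fR R' k' = k' → k ⊆ k' → fstar R' k ⊆ k')
    (hPool : Knowledge k0 = Knowledge (fstar R k0)) :
    fstar {r | r ∈ R ∧
        insert (r.1, r.2.1) r.2.2.2 ⊆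
          k0 ∪ {pv : P × V | pv.2 ∈ Knowledge k0 ∧ pv.2 ∉ ⋃ p, F p}} k0
      = fstar R k0 := by
  set RF : Set (P × V × P × Set (P × V)) := {r | r ∈ R ∧
        insert (r.1, r.2.1) r.2.2.2 ⊆
          k0 ∪ {pv : P × V | pv.2 ∈ Knowledge k0 ∧ pv.2 ∉ ⋃ p, F p}} with hRF
  have hRFsub : RF ⊆ R := fun r hr => hr.1
  -- Step 1: fstar R k0 is closed under fR RF
  have hsub1 : fstar RF k0 ⊆ fstar R k0 := by
    apply hmin
    · apply Set.Subset.antisymm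
      · rintro pv (h | ⟨pb, ka, h1, h2, h3⟩)
        · exact h
        · rw [← hfix R k0]
          exact Or.inr ⟨pb, ka, h1, h2, hRFsub h3⟩
      · exact Set.subset_union_left
    · exact hle R k0
  -- Step 2: every value in fstar R k0 is in Knowledge k0
  have hKnow : ∀ pv : P × V, pv ∈ fstar R k0 → pv.2 ∈ Knowledge k0 := by
    intro pv h
    rw [hPool]
    exact ⟨pv.1, h⟩
  -- Step 3: C := k0 ∪ (fstar R k0 minus fixed values) is closed under fR R
  set C : Set (P × V) := k0 ∪ {pv ∈ fstar R k0 | pv.2 ∉ ⋃ p, F p} with hC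
  have hCsub : C ⊆ fstar R k0 := by
    rintro pv (h | ⟨h, _⟩)
    · exact hle R k0 h
    · exact h
  have hCclosed : fR R C = C := by
    apply Set.Subset.antisymm
    · rintro ⟨pa, v⟩ (h | ⟨pb, ka, h1, h2, h3⟩)
      · exact h
      · have hmem : (pa, v) ∈ fstar R k0 := by
          rw [← hfix R k0]
          exact Or.inr ⟨pb, ka, hCsub h1, fun x hx => hCsub (h2 hx), h3⟩
        by_cases hv : v ∈ ⋃ p, F p
        · -- v is a fixed value
          obtain ⟨_, ⟨p, rfl⟩, hvp⟩ := hv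
          rcases h1 with h1 | ⟨_, h1'⟩
          · have hpb : p = pb := hSS p pb v hvp h1
            subst hpb
            obtain ⟨x, hxF, hxka⟩ := hFixed p v pa ka h3 hvp
            rcases h2 hxka with hk | ⟨_, hx'⟩
            · have : p = pa := hSS p pa x hxF hk
              subst this
              exact absurd h3 (hNoSelf p v ka)
            · exact absurd (Set.mem_iUnion.mpr ⟨p, hxF⟩) hx'
          · exact absurd (Set.mem_iUnion.mpr ⟨p, hvp⟩) h1'
        · exact Or.inr ⟨hmem, hv⟩
    · exact Set.subset_union_left
  have hRC : fstar R k0 ⊆ C := hmin R k0 C hCclosed Set.subset_union_left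
  -- Step 4: fstar R k0 ⊆ U
  have hU : fstar R k0 ⊆ k0 ∪ {pv : P × V | pv.2 ∈ Knowledge k0 ∧ pv.2 ∉ ⋃ p, F p} := by
    intro pv h
    rcases hRC h with h' | ⟨h', hnf⟩
    · exact Or.inl h'
    · exact Or.inr ⟨hKnow pv h', hnf⟩
  -- Step 5: fstar RF k0 is closed under fR R
  have hsub2 : fstar R k0 ⊆ fstar RF k0 := by
    apply hmin
    · apply Set.Subset.antisymm
      · rintro ⟨pa, v⟩ (h | ⟨pb, ka, h1, h2, h3⟩)
        · exact h
        · have hrF : (pb, v, pa, ka) ∈ RF := by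
            refine ⟨h3, ?_⟩
            intro x hx
            rcases hx with rfl | hx
            · exact hU (hsub1 h1)
            · exact hU (hsub1 (h2 hx))
          rw [← hfix RF k0]
          exact Or.inr ⟨pb, ka, h1, h2, hrF⟩
      · exact Set.subset_union_left
    · exact hle RF k0
  exact Set.Subset.antisymm hsub1 hsub2
end

section
/- For every n, a single step of the projection onto Oscar commutes with a step of the knowledge flow: if X_n = {v : (o, v) ∈ f_R^n(k_0)}, then X_{n+1} = g(X_n), under the hypothesis (P − {o}) × (Knowledge(k_0) − F) ⊆ k_0; consequently X_n = g^n(X_0) for all n (Knowledge Flow Analysis Theorem). -/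
variable {P V : Type*}

/-- The restriction `R_F` of the rules to values in `k0 ∪ (P × (Knowledge(k0) − F))`. -/
def RF (R : Set (P × V × P × Set (P × V))) (k0 : Set (P × V)) (Fall : Set V) :
    Set (P × V × P × Set (P × V)) :=
  {r | r ∈ R ∧
    insert (r.1, r.2.1) r.2.2.2 ⊆ k0 ∪ {pv : P × V | pv.2 ∈ Knowledge k0 ∧ pv.2 ∉ Fall}}

/-- `X → x`: some honest principal tells `x` to Oscar `o` via a rule of `R_F` whose
precondition projected on Oscar is `X`. -/
def arrow (R : Set (P × V × P × Set (P × V))) (k0 : Set (P × V)) (Fall : Set V) (o : P)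
    (X : Set V) (x : V) : Prop :=
  ∃ p ka, p ≠ o ∧ (p, x, o, ka) ∈ RF R k0 Fall ∧ X = {v | (o, v) ∈ ka}

/-- The projection function `g`. -/
def g (R : Set (P × V × P × Set (P × V))) (k0 : Set (P × V)) (Fall : Set V) (o : P)
    (X : Set V) : Set V :=
  X ∪ {x | ∃ Xσ ⊆ X, arrow R k0 Fall o Xσ x}

theorem knowledge_flow_analysis
    (R : Set (P × V × P × Set (P × V))) (k0 : Set (P × V)) (o : P) (F : P → Set V)
    (hNoSelf : ∀ (p : P) (v : V) (ka : Set (P × V)), (p, v, p, ka) ∉ R)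
    (hFixed : ∀ p, isFixedSet R p (F p))
    (hSS : ∀ (p pa : P) (v : V), v ∈ F p → (pa, v) ∈ k0 → p = pa)
    (fstar : Set (P × V) → Set (P × V))
    (hfix : ∀ k, fR R (fstar k) = fstar k)
    (hle : ∀ k, k ⊆ fstar k)
    (hmin : ∀ k k', fR R k' = k' → k ⊆ k' → fstar k ⊆ k')
    (hPool : Knowledge k0 = Knowledge (fstar k0))
    (hInit : {pv : P × V | pv.1 ≠ o ∧ pv.2 ∈ Knowledge k0 ∧ pv.2 ∉ ⋃ p, F p} ⊆ k0) :
    (∀ n : ℕ,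
      {v | (o, v) ∈ (fR R)^[n + 1] k0} =
        g R k0 (⋃ p, F p) o {v | (o, v) ∈ (fR R)^[n] k0}) ∧
    ∀ n : ℕ,
      {v | (o, v) ∈ (fR R)^[n] k0} = (g R k0 (⋃ p, F p) o)^[n] {v | (o, v) ∈ k0} := by
  have hmono : ∀ {k k' : Set (P × V)}, k ⊆ k' → fR R k ⊆ fR R k' := by
    intro k k' h pv hpv
    rcases hpv with hpv | ⟨pb, ka, h1, h2, h3⟩
    · exact Or.inl (h hpv)
    · exact Or.inr ⟨pb, ka, h h1, h2.trans h, h3⟩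
  have hsub : ∀ n, (fR R)^[n] k0 ⊆ fstar k0 := by
    intro n
    induction n with
    | zero => exact hle k0
    | succ n ih =>
        rw [Function.iterate_succ_apply']
        exact (hmono ih).trans (le_of_eq (hfix k0))
  have hk0n : ∀ n, k0 ⊆ (fR R)^[n] k0 := by
    intro n
    induction n with
    | zero => exact le_refl _
    | succ n ih =>
        rw [Function.iterate_succ_apply']
        exact ih.trans Set.subset_union_left
  have hL : ∀ n (p : P) (v : V) (q : P), v ∈ F p → (q, v) ∈ (fR R)^[n] k0 → q = p := by
    intro n
    induction n with
    | zero => intro p v q hv hk; exact (hSS p q v hv hk).symm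
    | succ n ih =>
        intro p v q hv hk
        rw [Function.iterate_succ_apply'] at hk
        rcases hk with hk | ⟨pb, ka, h1, h2, h3⟩
        · exact ih p v q hv hk
        · have hpb : pb = p := ih p v pb hv h1
          subst hpb
          obtain ⟨x, hx, hxa⟩ := hFixed pb v q ka h3 hv
          exact ih pb x q hx (h2 hxa)
  have hkey : ∀ n (q : P) (v : V), (q, v) ∈ (fR R)^[n] k0 →
      (q, v) ∈ k0 ∪ {pv : P × V | pv.2 ∈ Knowledge k0 ∧ pv.2 ∉ ⋃ p, F p} := by
    intro n q v hqv
    have hKv : v ∈ Knowledge k0 := by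
      rw [hPool]; exact ⟨q, hsub n hqv⟩
    by_cases hv : v ∈ ⋃ p, F p
    · obtain ⟨s, ⟨p, rfl⟩, hvp⟩ := hv
      have hq : q = p := hL n p v q hvp hqv
      obtain ⟨pa, hpa⟩ := hKv
      have : p = pa := hSS p pa v hvp hpa
      exact Or.inl (by rw [hq, this]; exact hpa)
    · exact Or.inr ⟨hKv, hv⟩
  have hstep : ∀ n : ℕ,
      {v | (o, v) ∈ (fR R)^[n + 1] k0} =
        g R k0 (⋃ p, F p) o {v | (o, v) ∈ (fR R)^[n] k0} := by
    intro n
    ext x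
    simp only [Set.mem_setOf_eq, g, Set.mem_union, Function.iterate_succ_apply']
    constructor
    · intro hx
      rcases hx with hx | ⟨pb, ka, h1, h2, h3⟩
      · exact Or.inl hx
      · refine Or.inr ⟨{v | (o, v) ∈ ka}, fun v hv => h2 hv, pb, ka, ?_, ⟨h3, ?_⟩, rfl⟩
        · intro hpo; subst hpo; exact hNoSelf pb x ka h3
        · rintro ⟨q, v⟩ hqv
          rcases Set.mem_insert_iff.mp hqv with heq | hmem
          · rw [heq]; exact hkey n pb x h1
          · exact hkey n q v (h2 hmem)
    · rintro (hx | ⟨Xσ, hXσ, p, ka, hpo, ⟨hR, hRF⟩, hXeq⟩)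
      · exact Set.mem_union_left _ hx
      · have hpx : (p, x) ∈ (fR R)^[n] k0 := by
          rcases hRF (Set.mem_insert _ _) with h | ⟨hK, hF⟩
          · exact hk0n n h
          · exact hk0n n (hInit ⟨hpo, hK, hF⟩)
        have hka : ka ⊆ (fR R)^[n] k0 := by
          rintro ⟨q, v⟩ hv
          rcases hRF (Set.mem_insert_of_mem _ hv) with h | ⟨hK, hF⟩
          · exact hk0n n h
          · by_cases hq : q = o
            · have hvX : v ∈ Xσ := by rw [hXeq]; rw [hq] at hv; exact hv
              rw [hq]
              exact hXσ hvX
            · exact hk0n n (hInit ⟨hq, hK, hF⟩)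
        exact Or.inr ⟨p, ka, hpx, hka, hR⟩
  refine ⟨hstep, ?_⟩
  intro n
  induction n with
  | zero => simp
  | succ n ih =>
      rw [hstep n, ih, Function.iterate_succ_apply']
end

section
/- (Fixed set lemma) Let S ⊆ V^m be locally collision free and suppose every rule of principal p has the form (p, x_i, p_a, {(p_a, x_j) : j ∈ W_i}) for some i ∈ C ∪ D and (x_1,…,x_m) ∈ S. Then V − S_∞ is a fixed set for p: for each such rule with x_i ∈ V − S_∞, there exists x ∈ V − S_∞ with (p_a, x) in the rule's precondition. -/
variable {P V : Type*} {m : ℕ}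

def ImS (S : Set (Fin m → V)) (C : Set (Fin m)) : Set V :=
  {v | ∃ i ∈ C, ∃ x ∈ S, x i = v}

def Stage (S : Set (Fin m → V)) (C : Set (Fin m)) (W : Fin m → Set (Fin m)) :
    ℕ → Set V
  | 0 => (ImS S C)ᶜ
  | n + 1 => Stage S C W n ∪
      {v | ∃ i ∈ C, ∃ x ∈ S, x i = v ∧ ∀ j ∈ W i, x j ∈ Stage S C W n}

def SInf (S : Set (Fin m → V)) (C : Set (Fin m)) (W : Fin m → Set (Fin m)) : Set V :=
  ⋃ n, Stage S C W n

lemma Stage_mono (S : Set (Fin m → V)) (C : Set (Fin m)) (W : Fin m → Set (Fin m)) :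
    Monotone (Stage S C W) := by
  apply monotone_nat_of_le_succ
  intro n
  exact Set.subset_union_left

theorem fixed_set_lemma
    (R : Set (P × V × P × Set (P × V))) (p : P)
    (S : Set (Fin m → V)) (C D : Set (Fin m)) (W : Fin m → Set (Fin m))
    (hLCF1 : ∀ i ∈ D, ∃ h ∈ C, h ∈ W i ∧ i ∈ W h)
    (hLCF2 : ∀ i ∈ C, ∀ t ∈ C, ∀ x ∈ S, ∀ y ∈ S,
      x i = y t → x '' (W i) = y '' (W t))
    (hshape : ∀ v pa ka, (p, v, pa, ka) ∈ R →
      ∃ i ∈ C ∪ D, ∃ x ∈ S, v = x i ∧ ka = {q : P × V | ∃ j ∈ W i, q = (pa, x j)}) :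
    ∀ v pa ka, (p, v, pa, ka) ∈ R → v ∉ SInf S C W →
      ∃ w, w ∉ SInf S C W ∧ (pa, w) ∈ ka := by
  intro v pa ka hR hv
  obtain ⟨i, hiCD, x, hxS, hvx, hka⟩ := hshape v pa ka hR
  subst hka
  rcases hiCD with hiC | hiD
  · -- i ∈ C: some j ∈ W i has x j ∉ SInf, else v would be in a stage
    by_contra hcon
    push_neg at hcon
    have hall : ∀ j ∈ W i, x j ∈ SInf S C W := by
      intro j hj
      by_contra hjn
      exact hcon (x j) hjn ⟨j, hj, rfl⟩
    -- choose stages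
    have hstage : ∀ j : Fin m, ∃ n, j ∈ W i → x j ∈ Stage S C W n := by
      intro j
      by_cases hj : j ∈ W i
      · obtain ⟨_, ⟨n, rfl⟩, hn⟩ := hall j hj
        exact ⟨n, fun _ => hn⟩
      · exact ⟨0, fun h => absurd h hj⟩
    choose f hf using hstage
    obtain N := Finset.univ.sup f
    have hN : ∀ j ∈ W i, x j ∈ Stage S C W (Finset.univ.sup f) := by
      intro j hj
      exact Stage_mono S C W (Finset.le_sup (Finset.mem_univ j)) (hf j hj)
    have : v ∈ Stage S C W (Finset.univ.sup f + 1) :=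
      Or.inr ⟨i, hiC, x, hxS, hvx.symm, hN⟩
    exact hv (Set.mem_iUnion.mpr ⟨_, this⟩)
  · -- i ∈ D
    obtain ⟨h, hhC, hhWi, hiWh⟩ := hLCF1 i hiD
    refine ⟨x h, ?_, ?_⟩
    · -- x h ∉ SInf
      intro hxh
      obtain ⟨_, ⟨n, rfl⟩, hn⟩ := hxh
      apply hv
      induction n with
      | zero =>
        exact absurd ⟨h, hhC, x, hxS, rfl⟩ hn
      | succ n ih =>
        rcases hn with hn | ⟨t, htC, y, hyS, hyt, hall⟩
        · exact ih hn
        · have himg := hLCF2 h hhC t htC x hxS y hyS hyt.symm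
          have hxi : x i ∈ x '' (W h) := ⟨i, hiWh, rfl⟩
          rw [himg] at hxi
          obtain ⟨j, hj, hje⟩ := hxi
          rw [hvx]
          rw [← hje]
          exact Set.mem_iUnion.mpr ⟨n, hall j hj⟩
    · exact ⟨h, hhWi, rfl⟩
end
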